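/- arXiv:2512.02229 — 2 statements merged into one kernel-verified Lean document; each statement's English description precedes it below -/
import Mathlib

section
/- For all t ≥ 0 and s ≥ e^{1/4}, one has s·t ≤ (e^{t²} − 1) + s·(log s)^{1/2}. -/
theorem stmt_0 (s t : ℝ) (ht : 0 ≤ t) (hs : Real.exp (1/4) ≤ s) :
    s * t ≤ (Real.exp (t ^ 2) - 1) + s * Real.sqrt (Real.log s) := by
  have hs0 : (0:ℝ) < s := lt_of_lt_of_le (Real.exp_pos _) hs
  have hlog : (1/4 : ℝ) ≤ Real.log s := (Real.le_log_iff_exp_le hs0).2 hs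
  have hlog0 : (0:ℝ) ≤ Real.log s := by linarith
  set u := Real.sqrt (Real.log s) with hu
  have hu2 : u ^ 2 = Real.log s := Real.sq_sqrt hlog0
  have hu_half : (1/2 : ℝ) ≤ u := by
    have : Real.sqrt (1/4) ≤ u := Real.sqrt_le_sqrt hlog
    rwa [show (1/4:ℝ) = (1/2)^2 by norm_num, Real.sqrt_sq (by norm_num)] at this
  have hse : s = Real.exp (u ^ 2) := by rw [hu2, Real.exp_log hs0]
  have hexp1 : (1:ℝ) ≤ Real.exp (t ^ 2) := Real.one_le_exp (by positivity)
  rcases le_or_gt t u with h | h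
  · nlinarith [mul_le_mul_of_nonneg_left h hs0.le]
  · have key : Real.exp (u ^ 2) * (t ^ 2 - u ^ 2 + 1) ≤ Real.exp (t ^ 2) := by
      have h1 := Real.add_one_le_exp (t ^ 2 - u ^ 2)
      have h2 : Real.exp (t ^ 2) = Real.exp (u ^ 2) * Real.exp (t ^ 2 - u ^ 2) := by
        rw [← Real.exp_add]; ring_nf
      nlinarith [Real.exp_pos (u ^ 2)]
    have hs1 : (1:ℝ) ≤ s := le_trans (Real.one_le_exp (by norm_num)) hs
    -- t^2 - u^2 = (t-u)(t+u) ≥ t - u since t+u ≥ 1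
    have htu : t - u ≤ t ^ 2 - u ^ 2 := by nlinarith
    nlinarith [mul_le_mul_of_nonneg_left htu hs0.le]
end

section
/- Suppose f : ℝ → ℝ is continuous, f(t)/t → 0 as t → 0, and f(t)/e^{β t²} → 0 as t → +∞ for some β > 0. Then for every ε > 0 and every δ ≥ 1 there exists c = c(ε, δ) > 0 such that |f(t)| ≤ ε|t| + c|t|^δ (e^{β t²} − 1) for all t ≥ 0. -/
open Filter Real

/-- one-variable version of Lemma 4.1: subcritical exponential growth
plus vanishing at 0 gives the estimate `|f t| ≤ ε|t| + c|t|^δ (e^{βt²} − 1)` for `t ≥ 0`. -/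
theorem stmt_8 (f : ℝ → ℝ) (hf : Continuous f) (β : ℝ) (hβ : 0 < β)
    (h0 : Filter.Tendsto (fun t => f t / t) (nhdsWithin 0 {0}ᶜ) (nhds 0))
    (hinf : Filter.Tendsto (fun t => f t / Real.exp (β * t ^ 2)) Filter.atTop (nhds 0)) :
    ∀ ε > 0, ∀ δ ≥ (1 : ℝ), ∃ c > 0, ∀ t ≥ (0 : ℝ),
      |f t| ≤ ε * |t| + c * |t| ^ δ * (Real.exp (β * t ^ 2) - 1) := by
  have hE1 : ∀ t : ℝ, (1 : ℝ) ≤ Real.exp (β * t ^ 2) := fun t =>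
    Real.one_le_exp (by positivity)
  have hf0 : f 0 = 0 := by
    have h1 : Tendsto f (nhdsWithin 0 {0}ᶜ) (nhds (f 0)) :=
      (hf.tendsto 0).mono_left nhdsWithin_le_nhds
    have h2 : Tendsto f (nhdsWithin 0 {0}ᶜ) (nhds 0) := by
      have hmul := h0.mul (tendsto_id.mono_left
        (nhdsWithin_le_nhds : nhdsWithin (0:ℝ) {0}ᶜ ≤ nhds 0))
      rw [zero_mul] at hmul
      refine hmul.congr' ?_
      filter_upwards [self_mem_nhdsWithin] with t ht
      simp only [Set.mem_compl_iff, Set.mem_singleton_iff] at ht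
      field_simp
      rfl
    exact tendsto_nhds_unique h1 h2
  intro ε hε δ hδ
  have hδ0 : (0:ℝ) ≤ δ := by linarith
  obtain ⟨d, hd, hsmall⟩ := Metric.tendsto_nhdsWithin_nhds.mp h0 ε hε
  obtain ⟨N, hN⟩ := Filter.eventually_atTop.mp ((Metric.tendsto_nhds.mp hinf) 1 one_pos)
  set T : ℝ := max N (max d 1) with hT
  obtain ⟨M, hM⟩ := (isCompact_Icc : IsCompact (Set.Icc d T)).exists_bound_of_continuousOn
    hf.continuousOn
  set m : ℝ := d ^ δ * (Real.exp (β * d ^ 2) - 1) with hm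
  have hexp_d : (1 : ℝ) < Real.exp (β * d ^ 2) := by
    rw [show (1:ℝ) = Real.exp 0 by simp]
    exact Real.exp_lt_exp.mpr (by positivity)
  have hmpos : 0 < m := mul_pos (Real.rpow_pos_of_pos hd δ) (by linarith)
  have hexpβ : Real.exp (-β) < 1 := by
    rw [show (1:ℝ) = Real.exp 0 by simp]
    exact Real.exp_lt_exp.mpr (by linarith)
  set K : ℝ := (1 - Real.exp (-β))⁻¹ with hK
  have hKpos : 0 < K := inv_pos.mpr (by linarith)
  set A : ℝ := max M 0 / m with hA
  have hApos : 0 ≤ A := div_nonneg (le_max_right _ _) hmpos.le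
  refine ⟨K + A, by linarith, ?_⟩
  intro t ht
  rw [abs_of_nonneg ht]
  have hEt1 := hE1 t
  have htδ0 : (0:ℝ) ≤ t ^ δ := Real.rpow_nonneg ht δ
  rcases eq_or_lt_of_le ht with h0t | h0t
  · rw [← h0t, hf0]
    simp
  · rcases lt_or_ge t d with htd | htd
    · -- small region: 0 < t < d
      have hts := hsmall (by simpa using h0t.ne')
        (by rw [Real.dist_eq, sub_zero, abs_of_nonneg ht]; exact htd)
      rw [Real.dist_eq, sub_zero, abs_div, abs_of_nonneg ht] at hts
      have hft : |f t| < ε * t := by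
        rw [div_lt_iff₀ h0t] at hts
        linarith [hts]
      have hrest : 0 ≤ (K + A) * t ^ δ * (Real.exp (β * t ^ 2) - 1) := by
        apply mul_nonneg (mul_nonneg (by linarith) htδ0) (by linarith)
      linarith
    · -- t ≥ d
      have hmle : m ≤ t ^ δ * (Real.exp (β * t ^ 2) - 1) := by
        apply mul_le_mul
        · exact Real.rpow_le_rpow hd.le htd hδ0
        · have : Real.exp (β * d ^ 2) ≤ Real.exp (β * t ^ 2) := by
            apply Real.exp_le_exp.mpr
            have : d ^ 2 ≤ t ^ 2 := by nlinarith
            nlinarith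
          linarith
        · linarith
        · exact htδ0
      rcases le_or_gt t T with htT | htT
      · -- middle region
        have hfM : |f t| ≤ M := hM t ⟨htd, htT⟩
        have hMA : max M 0 = A * m := by
          rw [hA, div_mul_cancel₀ _ hmpos.ne']
        have h1 : |f t| ≤ A * m := by
          rw [← hMA]; exact hfM.trans (le_max_left _ _)
        have h2 : A * m ≤ A * (t ^ δ * (Real.exp (β * t ^ 2) - 1)) :=
          mul_le_mul_of_nonneg_left hmle hApos
        have hnn : 0 ≤ t ^ δ * (Real.exp (β * t ^ 2) - 1) :=
          mul_nonneg htδ0 (by linarith)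
        have h3 : A * (t ^ δ * (Real.exp (β * t ^ 2) - 1)) ≤
            (K + A) * t ^ δ * (Real.exp (β * t ^ 2) - 1) := by
          calc A * (t ^ δ * (Real.exp (β * t ^ 2) - 1))
              ≤ (K + A) * (t ^ δ * (Real.exp (β * t ^ 2) - 1)) :=
                mul_le_mul_of_nonneg_right (by linarith) hnn
            _ = (K + A) * t ^ δ * (Real.exp (β * t ^ 2) - 1) := by ring
        linarith [mul_nonneg hε.le ht]
      · -- large region
        have htN : N ≤ t := le_trans (le_max_left _ _) htT.le
        have ht1 : (1:ℝ) ≤ t := le_trans (le_trans (le_max_right _ _) (le_max_right _ _)) htT.le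
        have hEpos : 0 < Real.exp (β * t ^ 2) := Real.exp_pos _
        have hfE : |f t| ≤ Real.exp (β * t ^ 2) := by
          have := hN t htN
          rw [Real.dist_eq, sub_zero, abs_div, abs_of_pos hEpos, div_lt_iff₀ hEpos] at this
          linarith
        have hEK : Real.exp (β * t ^ 2) ≤ K * (Real.exp (β * t ^ 2) - 1) := by
          rw [hK, inv_mul_eq_div, le_div_iff₀ (by linarith : (0:ℝ) < 1 - Real.exp (-β))]
          have h1 : (1:ℝ) ≤ Real.exp (-β) * Real.exp (β * t ^ 2) := by
            rw [← Real.exp_add]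
            apply Real.one_le_exp
            nlinarith [mul_le_mul_of_nonneg_left (show (1:ℝ) ≤ t ^ 2 by nlinarith) hβ.le]
          nlinarith
        have htδ1 : (1:ℝ) ≤ t ^ δ := by
          calc (1:ℝ) ≤ t := ht1
          _ = t ^ (1:ℝ) := (Real.rpow_one t).symm
          _ ≤ t ^ δ := Real.rpow_le_rpow_of_exponent_le ht1 hδ
        have hnn : (0:ℝ) ≤ Real.exp (β * t ^ 2) - 1 := by linarith
        have hKc : K * (Real.exp (β * t ^ 2) - 1) ≤
            (K + A) * t ^ δ * (Real.exp (β * t ^ 2) - 1) := by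
          calc K * (Real.exp (β * t ^ 2) - 1) = K * 1 * (Real.exp (β * t ^ 2) - 1) := by ring
            _ ≤ K * t ^ δ * (Real.exp (β * t ^ 2) - 1) :=
                mul_le_mul_of_nonneg_right
                  (mul_le_mul_of_nonneg_left htδ1 hKpos.le) hnn
            _ ≤ (K + A) * t ^ δ * (Real.exp (β * t ^ 2) - 1) :=
                mul_le_mul_of_nonneg_right
                  (mul_le_mul_of_nonneg_right (by linarith) htδ0) hnn
        linarith [mul_nonneg hε.le ht]
end
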